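/- Let ȳ = y₁ + y₂ with 0 ≤ ȳ ≤ θ. The aggregate (social planner) profit g(s) = (ȳ + s)·(xρ + μk − βk(ȳ + s))/(ρ(ρ+k)) − c·s has a unique maximizer on [0, θ − ȳ], and this maximizer (the Pareto-optimal cumulative installation) equals max{0, min{A(x) − ȳ, θ − ȳ}}. In particular the unconstrained optimum of g is attained when the aggregate capacity ȳ + s equals A(x), so the Pareto optimum saturates capacity precisely when A(x) ≥ θ, whereas in the Nash problem saturation occurs already for A(x) ≥ (3/4)θ. -/

import Mathlib

noncomputable section

/-- One-step payoff of a player with initial capacity `yi` installing `Ii`,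
when the other player's resulting capacity is `Yj`. -/
def payoff (ρ k β μ c x yi Ii Yj : ℝ) : ℝ :=
  (yi + Ii) * (x * ρ + μ * k - β * k * ((yi + Ii) + Yj)) / (ρ * (ρ + k)) - c * Ii

/-- The threshold `A(x) = (xρ + μk − cρ(ρ+k))/(2βk)`. -/
def Afun (ρ k β μ c x : ℝ) : ℝ := (x * ρ + μ * k - c * ρ * (ρ + k)) / (2 * β * k)

/-- `(I₁, I₂)` is a feasible Nash equilibrium of the one-step game. -/
def IsNash (ρ k β θ μ c x y₁ y₂ I₁ I₂ : ℝ) : Prop :=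
  0 ≤ I₁ ∧ 0 ≤ I₂ ∧ y₁ + I₁ + (y₂ + I₂) ≤ θ ∧
  (∀ I₁' : ℝ, 0 ≤ I₁' → y₁ + I₁' + (y₂ + I₂) ≤ θ →
    payoff ρ k β μ c x y₁ I₁' (y₂ + I₂) ≤ payoff ρ k β μ c x y₁ I₁ (y₂ + I₂)) ∧
  (∀ I₂' : ℝ, 0 ≤ I₂' → y₂ + I₂' + (y₁ + I₁) ≤ θ →
    payoff ρ k β μ c x y₂ I₂' (y₁ + I₁) ≤ payoff ρ k β μ c x y₂ I₂ (y₁ + I₁))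

/-- Aggregate (social planner) profit when the initial aggregate capacity is `ybar` and
the cumulative installation is `s`. -/
def planner (ρ k β μ c x ybar s : ℝ) : ℝ :=
  (ybar + s) * (x * ρ + μ * k - β * k * (ybar + s)) / (ρ * (ρ + k)) - c * s

/-- The aggregate profit `g(s) = (ȳ + s)(xρ + μk − βk(ȳ + s))/(ρ(ρ+k)) − cs` has a unique
maximizer on `[0, θ − ȳ]`, equal to `max{0, min{A(x) − ȳ, θ − ȳ}}`; the unconstrained
optimum is attained when the aggregate capacity equals `A(x)`; the Pareto optimum
saturates capacity precisely when `A(x) ≥ θ`, whereas in the Nash problem saturation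
occurs already for `A(x) ≥ (3/4)θ`. -/
lemma planner_eq (ρ k β μ c x ybar s : ℝ) (hρ : 0 < ρ) (hk : 0 < k) (hβ : 0 < β) :
    planner ρ k β μ c x ybar s =
      c * ybar + (β * k / (ρ * (ρ + k))) * (Afun ρ k β μ c x) ^ 2
        - (β * k / (ρ * (ρ + k))) * (ybar + s - Afun ρ k β μ c x) ^ 2 := by
  have h1 : ρ * (ρ + k) ≠ 0 := by positivity
  have h2 : (2 : ℝ) * β * k ≠ 0 := by positivity
  unfold planner Afun
  field_simp
  ring

lemma payoff_eq (ρ k β μ c x yi Ii Yj : ℝ) (hρ : 0 < ρ) (hk : 0 < k) (hβ : 0 < β) :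
    payoff ρ k β μ c x yi Ii Yj =
      c * yi + (β * k / (ρ * (ρ + k))) * (2 * Afun ρ k β μ c x - Yj) * (yi + Ii)
        - (β * k / (ρ * (ρ + k))) * (yi + Ii) ^ 2 := by
  have h1 : ρ * (ρ + k) ≠ 0 := by positivity
  have h2 : (2 : ℝ) * β * k ≠ 0 := by positivity
  unfold payoff Afun
  field_simp
  ring

set_option maxHeartbeats 1000000 in
theorem stmt7 (ρ k β θ c μ x ybar : ℝ)
    (hρ : 0 < ρ) (hk : 0 < k) (hβ : 0 < β) (hθ : 0 < θ) (hc : 0 ≤ c)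
    (hy0 : 0 ≤ ybar) (hyθ : ybar ≤ θ) :
    (max 0 (min (Afun ρ k β μ c x - ybar) (θ - ybar)) ∈ Set.Icc (0 : ℝ) (θ - ybar)) ∧
    (∀ s ∈ Set.Icc (0 : ℝ) (θ - ybar),
      planner ρ k β μ c x ybar s ≤
        planner ρ k β μ c x ybar (max 0 (min (Afun ρ k β μ c x - ybar) (θ - ybar)))) ∧
    (∀ s ∈ Set.Icc (0 : ℝ) (θ - ybar),
      (∀ s' ∈ Set.Icc (0 : ℝ) (θ - ybar),
        planner ρ k β μ c x ybar s' ≤ planner ρ k β μ c x ybar s) →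
      s = max 0 (min (Afun ρ k β μ c x - ybar) (θ - ybar))) ∧
    (∀ s : ℝ, planner ρ k β μ c x ybar s ≤
      planner ρ k β μ c x ybar (Afun ρ k β μ c x - ybar)) ∧
    (ybar < θ →
      (max 0 (min (Afun ρ k β μ c x - ybar) (θ - ybar)) = θ - ybar ↔
        θ ≤ Afun ρ k β μ c x)) ∧
    (3 / 4 * θ ≤ Afun ρ k β μ c x →
      ∀ z₁ z₂ I₁ I₂ : ℝ, 0 ≤ z₁ → 0 ≤ z₂ → z₁ + z₂ < θ →
        IsNash ρ k β θ μ c x z₁ z₂ I₁ I₂ → z₁ + I₁ + (z₂ + I₂) = θ) := by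
  have hq : 0 < β * k / (ρ * (ρ + k)) := by positivity
  set q : ℝ := β * k / (ρ * (ρ + k)) with hqdef
  set A : ℝ := Afun ρ k β μ c x with hAdef
  set a : ℝ := A - ybar with hadef
  set M : ℝ := θ - ybar with hMdef
  have hM0 : 0 ≤ M := by simp only [hMdef]; linarith
  set p : ℝ := max 0 (min a M) with hpdef
  have hp0 : 0 ≤ p := le_max_left _ _
  have hpM : p ≤ M := max_le hM0 (min_le_right _ _)
  have hplan : ∀ s : ℝ, planner ρ k β μ c x ybar s =
      c * ybar + q * A ^ 2 - q * (s - a) ^ 2 := by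
    intro s
    have := planner_eq ρ k β μ c x ybar s hρ hk hβ
    rw [this]
    simp only [hqdef, hAdef, hadef]
    ring
  -- distance comparison: p is closest point
  have hdist : ∀ s ∈ Set.Icc (0 : ℝ) M, (p - a) ^ 2 ≤ (s - a) ^ 2 := by
    intro s hs
    obtain ⟨hs0, hsM⟩ := hs
    rcases le_or_gt a 0 with h | h
    · have : p = 0 := by
        simp only [hpdef]
        rw [max_eq_left]
        exact le_trans (min_le_left _ _) h
      rw [this]; nlinarith
    · rcases le_or_gt a M with h2 | h2
      · have : p = a := by
          simp only [hpdef, min_eq_left h2]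
          exact max_eq_right h.le
        rw [this]; nlinarith
      · have : p = M := by
          simp only [hpdef, min_eq_right h2.le]
          exact max_eq_right hM0
        rw [this]; nlinarith
  refine ⟨⟨hp0, hpM⟩, ?_, ?_, ?_, ?_, ?_⟩
  · intro s hs
    rw [hplan, hplan]
    have := hdist s hs
    nlinarith
  · intro s hs hmax
    have h1 := hmax p ⟨hp0, hpM⟩
    rw [hplan, hplan] at h1
    have h2 : (s - a) ^ 2 ≤ (p - a) ^ 2 := by nlinarith
    obtain ⟨hs0, hsM⟩ := hs
    rcases le_or_gt a 0 with h | h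
    · have hp' : p = 0 := by
        simp only [hpdef]
        rw [max_eq_left]
        exact le_trans (min_le_left _ _) h
      rw [hp'] at h2 ⊢; nlinarith
    · rcases le_or_gt a M with hh | hh
      · have hp' : p = a := by
          simp only [hpdef, min_eq_left hh]
          exact max_eq_right h.le
        rw [hp'] at h2 ⊢; nlinarith
      · have hp' : p = M := by
          simp only [hpdef, min_eq_right hh.le]
          exact max_eq_right hM0
        rw [hp'] at h2 ⊢; nlinarith
  · intro s
    rw [hplan, hplan]
    have : (a - a) ^ 2 = 0 := by ring
    nlinarith [sq_nonneg (s - a)]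
  · intro hlt
    constructor
    · intro hpe
      by_contra hcon
      push_neg at hcon
      have haM : a < M := by simp only [hadef, hMdef]; linarith
      have : p = max 0 a := by rw [hpdef, min_eq_left haM.le]
      have hpa : p < M := by
        rw [this]
        apply max_lt _ haM
        simp only [hMdef]; linarith
      rw [hpe] at hpa; exact lt_irrefl _ hpa
    · intro hge
      have haM : M ≤ a := by simp only [hadef, hMdef]; linarith
      simp only [hpdef, min_eq_right haM]
      exact max_eq_right hM0
  · intro hA34 z₁ z₂ I₁ I₂ hz1 hz2 hzθ hN
    obtain ⟨hI1, hI2, hYθ, hB1, hB2⟩ := hN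
    by_contra hcon
    have hY : z₁ + I₁ + (z₂ + I₂) < θ := lt_of_le_of_ne hYθ hcon
    set t₁ : ℝ := z₁ + I₁ with ht1
    set t₂ : ℝ := z₂ + I₂ with ht2
    -- claim: 2 * t₁ + t₂ ≥ 2 * A
    have key : ∀ (z I tj : ℝ), 0 ≤ I → z + I + tj < θ →
        (∀ I' : ℝ, 0 ≤ I' → z + I' + tj ≤ θ →
          payoff ρ k β μ c x z I' tj ≤ payoff ρ k β μ c x z I tj) →
        2 * A ≤ 2 * (z + I) + tj := by
      intro z I tj hI0 hlt hB
      by_contra hcc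
      push_neg at hcc
      set t : ℝ := z + I with htdef
      set t' : ℝ := min (θ - tj) (A - tj / 2) with ht'
      have htt' : t < t' := by
        apply lt_min
        · linarith
        · simp only [htdef]; linarith
      have hI'0 : 0 ≤ t' - z := by simp only [htdef] at htt'; linarith
      have hfeas : z + (t' - z) + tj ≤ θ := by
        have : t' ≤ θ - tj := min_le_left _ _
        linarith
      have hle := hB (t' - z) hI'0 hfeas
      rw [payoff_eq ρ k β μ c x z (t' - z) tj hρ hk hβ,
          payoff_eq ρ k β μ c x z I tj hρ hk hβ] at hle
      have ht'A : t' ≤ A - tj / 2 := min_le_right _ _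
      have hsum : t' + t < 2 * A - tj := by simp only [htdef] at *; linarith
      have hz' : z + (t' - z) = t' := by ring
      rw [hz'] at hle
      rw [← hqdef, ← hAdef, ← htdef] at hle
      nlinarith [mul_pos hq (mul_pos (sub_pos.mpr htt') (by linarith : (0:ℝ) < 2 * A - tj - t' - t))]
    have k1 : 2 * A ≤ 2 * t₁ + t₂ := by
      apply key z₁ I₁ t₂ hI1 (by linarith)
      intro I' h1 h2
      exact hB1 I' h1 h2
    have k2 : 2 * A ≤ 2 * t₂ + t₁ := by
      apply key z₂ I₂ t₁ hI2 (by linarith)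
      intro I' h1 h2
      exact hB2 I' h1 h2
    have : 3 * θ ≤ 3 * (t₁ + t₂) := by linarith
    linarith
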